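/- With notation as above, ‖X − D_y‖_F² ≥ ‖D_x − D_y‖_F², where D_x is the diagonal matrix of singular values of X and D_y is a diagonal matrix with nonincreasing nonnegative entries. -/

import Mathlib

open Matrix

/-- Rectangular diagonal matrix built from a vector of length `m` (with `m ≤ n`). -/
def diagMN (m n : ℕ) (σ : Fin m → ℝ) : Matrix (Fin m) (Fin n) ℝ :=
  Matrix.of fun (i : Fin m) (j : Fin n) => if (i : ℕ) = (j : ℕ) then σ i else 0

/-- Squared Frobenius norm. -/
def frobSq (m n : ℕ) (M : Matrix (Fin m) (Fin n) ℝ) : ℝ :=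
  ∑ i : Fin m, ∑ j : Fin n, (M i j) ^ 2

namespace FrobAux

open Finset

lemma sum_range_ite_le {m s : ℕ} (hs : s < m) (h : ℕ → ℝ) :
    ∑ i ∈ Finset.range m, (if i ≤ s then h i else 0) = ∑ i ∈ Finset.range (s+1), h i := by
  rw [← Finset.sum_filter]
  congr 1; ext x; simp only [Finset.mem_filter, Finset.mem_range]; omega

lemma f_eq_sum {m i : ℕ} (hi : i < m) (f : ℕ → ℝ) (hfm : f m = 0) :
    f i = ∑ s ∈ Finset.range m, (if i ≤ s then f s - f (s+1) else 0) := by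
  rw [← Finset.sum_filter]
  have hfil : Finset.filter (fun s => i ≤ s) (Finset.range m) = Finset.Ico i m := by
    ext x; simp only [Finset.mem_filter, Finset.mem_range, Finset.mem_Ico]; omega
  rw [hfil, Finset.sum_Ico_eq_sum_range]
  have h2 := Finset.sum_range_sub' (fun j => f (i + j)) (m - i)
  simp only [add_zero, ← add_assoc] at h2 ⊢
  rw [h2]
  have : i + (m - i) = m := by omega
  rw [this, hfm, sub_zero]

lemma swap4 (m : ℕ) (F : ℕ→ℕ→ℕ→ℕ→ℝ) :
    ∑ i ∈ range m, ∑ k ∈ range m, ∑ s ∈ range m, ∑ t ∈ range m, F i k s t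
      = ∑ s ∈ range m, ∑ t ∈ range m, ∑ i ∈ range m, ∑ k ∈ range m, F i k s t := by
  rw [Finset.sum_congr rfl (fun i _ => Finset.sum_comm)]
  rw [Finset.sum_comm]
  rw [Finset.sum_congr rfl (fun s _ =>
      Finset.sum_congr rfl (fun i _ => Finset.sum_comm))]
  exact Finset.sum_congr rfl (fun s _ => Finset.sum_comm)

lemma key_abel (m : ℕ) (f g : ℕ → ℝ)
    (hfdec : ∀ s, f (s+1) ≤ f s) (hfm : f m = 0)
    (hgdec : ∀ s, g (s+1) ≤ g s) (hgm : g m = 0)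
    (W : ℕ → ℕ → ℝ)
    (hW : ∀ s t, s < m → t < m →
      ∑ i ∈ range (s+1), ∑ k ∈ range (t+1), W i k ≤ (min s t : ℝ) + 1) :
    ∑ i ∈ range m, ∑ k ∈ range m, f i * g k * W i k ≤ ∑ i ∈ range m, f i * g i := by
  set δ : ℕ → ℝ := fun s => f s - f (s+1) with hδ
  set ε : ℕ → ℝ := fun t => g t - g (t+1) with hε
  have hδ0 : ∀ s, 0 ≤ δ s := fun s => sub_nonneg.mpr (hfdec s)
  have hε0 : ∀ t, 0 ≤ ε t := fun t => sub_nonneg.mpr (hgdec t)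
  calc ∑ i ∈ range m, ∑ k ∈ range m, f i * g k * W i k
      = ∑ i ∈ range m, ∑ k ∈ range m, ∑ s ∈ range m, ∑ t ∈ range m,
          (if i ≤ s then δ s else 0) * ((if k ≤ t then ε t else 0) * W i k) := by
        refine Finset.sum_congr rfl fun i hi => Finset.sum_congr rfl fun k hk => ?_
        rw [f_eq_sum (mem_range.mp hi) f hfm, f_eq_sum (mem_range.mp hk) g hgm,
          Finset.sum_mul_sum, Finset.sum_mul]
        simp_rw [Finset.sum_mul, mul_assoc]
        rfl
    _ = ∑ s ∈ range m, ∑ t ∈ range m, ∑ i ∈ range m, ∑ k ∈ range m,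
          (if i ≤ s then δ s else 0) * ((if k ≤ t then ε t else 0) * W i k) := swap4 m _
    _ = ∑ s ∈ range m, ∑ t ∈ range m, δ s * ε t *
          (∑ i ∈ range (s+1), ∑ k ∈ range (t+1), W i k) := by
        refine Finset.sum_congr rfl fun s hs => Finset.sum_congr rfl fun t ht => ?_
        rw [mem_range] at hs ht
        have h1 : ∀ i k : ℕ, (if i ≤ s then δ s else 0) * ((if k ≤ t then ε t else 0) * W i k)
            = if i ≤ s then (if k ≤ t then δ s * ε t * W i k else 0) else 0 := by
          intro i k; split_ifs <;> ring
        simp_rw [h1]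
        have h2 : ∀ i : ℕ, ∑ k ∈ range m, (if i ≤ s then (if k ≤ t then δ s * ε t * W i k else 0) else 0)
            = if i ≤ s then (∑ k ∈ range (t+1), δ s * ε t * W i k) else 0 := by
          intro i
          split_ifs with h
          · exact sum_range_ite_le ht _
          · simp
        rw [Finset.sum_congr rfl fun i _ => h2 i, sum_range_ite_le hs]
        rw [Finset.mul_sum]
        refine Finset.sum_congr rfl fun i _ => ?_
        rw [Finset.mul_sum]
    _ ≤ ∑ s ∈ range m, ∑ t ∈ range m, δ s * ε t * ((min s t : ℝ) + 1) := by
        refine Finset.sum_le_sum fun s hs => Finset.sum_le_sum fun t ht => ?_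
        exact mul_le_mul_of_nonneg_left (hW s t (mem_range.mp hs) (mem_range.mp ht))
          (mul_nonneg (hδ0 s) (hε0 t))
    _ = ∑ i ∈ range m, f i * g i := by
        have swap3 : ∑ i ∈ range m, ∑ s ∈ range m, ∑ t ∈ range m,
            (if i ≤ s then δ s else 0) * (if i ≤ t then ε t else 0)
            = ∑ s ∈ range m, ∑ t ∈ range m, ∑ i ∈ range m,
            (if i ≤ s then δ s else 0) * (if i ≤ t then ε t else 0) := by
          rw [Finset.sum_comm]
          exact Finset.sum_congr rfl fun s _ => Finset.sum_comm
        have hrhs : ∑ i ∈ range m, f i * g i = ∑ s ∈ range m, ∑ t ∈ range m, ∑ i ∈ range m,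
            (if i ≤ s then δ s else 0) * (if i ≤ t then ε t else 0) := by
          rw [← swap3]
          refine Finset.sum_congr rfl fun i hi => ?_
          rw [f_eq_sum (mem_range.mp hi) f hfm, f_eq_sum (mem_range.mp hi) g hgm,
            Finset.sum_mul_sum]
        rw [hrhs]
        refine Finset.sum_congr rfl fun s hs => Finset.sum_congr rfl fun t ht => ?_
        rw [mem_range] at hs ht
        have h1 : ∀ i : ℕ, (if i ≤ s then δ s else 0) * (if i ≤ t then ε t else 0)
            = if i ≤ min s t then δ s * ε t else 0 := by
          intro i
          split_ifs <;> first | ring1 | omega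
        simp only [h1]
        rw [sum_range_ite_le (lt_of_le_of_lt (min_le_left s t) hs), Finset.sum_const,
          Finset.card_range, nsmul_eq_mul]
        push_cast
        ring

lemma expand_sub (m n : ℕ) (hmn : m ≤ n) (M : Matrix (Fin m) (Fin n) ℝ) (σ : Fin m → ℝ) :
    frobSq m n (M - diagMN m n σ) = frobSq m n M
      - 2 * (∑ i : Fin m, M i (Fin.castLE hmn i) * σ i) + ∑ i : Fin m, (σ i)^2 := by
  have h1 : ∀ (i : Fin m) (j : Fin n), ((i:ℕ) = (j:ℕ)) ↔ j = Fin.castLE hmn i := by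
    intro i j; rw [Fin.ext_iff]; simp [Fin.coe_castLE]; omega
  unfold frobSq
  have h2 : ∀ i : Fin m, ∑ j : Fin n, (M i j - diagMN m n σ i j)^2
      = ∑ j : Fin n, ((M i j)^2 - (if j = Fin.castLE hmn i then 2 * (M i j * σ i) - σ i ^2 else 0)) := by
    intro i
    refine Finset.sum_congr rfl fun j _ => ?_
    simp only [diagMN, Matrix.of_apply]
    by_cases hc : (i:ℕ) = (j:ℕ)
    · rw [if_pos hc, if_pos ((h1 i j).mp hc)]
      have : j = Fin.castLE hmn i := (h1 i j).mp hc
      subst this; ring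
    · rw [if_neg hc, if_neg (fun h => hc ((h1 i j).mpr h))]; ring
  simp only [Matrix.sub_apply]
  simp_rw [h2, Finset.sum_sub_distrib, Finset.sum_ite_eq' Finset.univ, Finset.mem_univ, if_true]
  rw [Finset.mul_sum, Finset.sum_sub_distrib]
  ring

lemma frobSq_eq_trace (m n : ℕ) (M : Matrix (Fin m) (Fin n) ℝ) :
    frobSq m n M = Matrix.trace (M * Mᵀ) := by
  unfold frobSq
  simp [Matrix.trace, Matrix.diag, Matrix.mul_apply, Matrix.transpose_apply, sq]

lemma frob_invariant (m n : ℕ) (hmn : m ≤ n)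
    (U : Matrix (Fin m) (Fin m) ℝ) (V : Matrix (Fin n) (Fin n) ℝ)
    (hU : U ∈ Matrix.orthogonalGroup (Fin m) ℝ)
    (hV : V ∈ Matrix.orthogonalGroup (Fin n) ℝ) (σx : Fin m → ℝ) :
    frobSq m n (U * diagMN m n σx * Vᵀ) = frobSq m n (diagMN m n σx) := by
  have hU' : Uᵀ * U = 1 := by
    have := hU.1
    rwa [Matrix.star_eq_conjTranspose, Matrix.conjTranspose_eq_transpose_of_trivial] at this
  have hV' : Vᵀ * V = 1 := by
    have := hV.1
    rwa [Matrix.star_eq_conjTranspose, Matrix.conjTranspose_eq_transpose_of_trivial] at this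
  rw [frobSq_eq_trace, frobSq_eq_trace]
  rw [Matrix.transpose_mul, Matrix.transpose_mul, Matrix.transpose_transpose]
  have key : U * diagMN m n σx * Vᵀ * (V * ((diagMN m n σx)ᵀ * Uᵀ))
      = U * (diagMN m n σx * ((diagMN m n σx)ᵀ * Uᵀ)) := by
    simp only [Matrix.mul_assoc]
    rw [← Matrix.mul_assoc Vᵀ V, hV', Matrix.one_mul]
  rw [key, Matrix.trace_mul_comm]
  simp only [Matrix.mul_assoc]
  rw [hU', Matrix.mul_one]

lemma entry_formula (m n : ℕ) (hmn : m ≤ n)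
    (U : Matrix (Fin m) (Fin m) ℝ) (V : Matrix (Fin n) (Fin n) ℝ) (σx : Fin m → ℝ)
    (i : Fin m) (j : Fin n) :
    (U * diagMN m n σx * Vᵀ) i j = ∑ k : Fin m, U i k * σx k * V j (Fin.castLE hmn k) := by
  have h1 : ∀ (k : Fin m) (l : Fin n), ((k:ℕ) = (l:ℕ)) ↔ l = Fin.castLE hmn k := by
    intro k l; rw [Fin.ext_iff]; simp [Fin.coe_castLE]; omega
  simp only [Matrix.mul_apply, Matrix.transpose_apply, diagMN, Matrix.of_apply]
  simp_rw [Finset.sum_mul]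
  rw [Finset.sum_comm]
  refine Finset.sum_congr rfl fun k _ => ?_
  have h2 : ∀ x : Fin n, (U i k * if (k:ℕ) = (x:ℕ) then σx k else 0) * V j x
      = if x = Fin.castLE hmn k then U i k * σx k * V j x else 0 := by
    intro x
    by_cases hc : (k:ℕ) = (x:ℕ)
    · rw [if_pos hc, if_pos ((h1 k x).mp hc)]
    · rw [if_neg hc, if_neg (fun h => hc ((h1 k x).mpr h)), mul_zero, zero_mul]
  rw [Finset.sum_congr rfl fun x _ => h2 x, Finset.sum_ite_eq' Finset.univ]
  simp

end FrobAux

theorem frob_dist_ge_diag_dist (m n : ℕ) (hmn : m ≤ n)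
    (X : Matrix (Fin m) (Fin n) ℝ)
    (U : Matrix (Fin m) (Fin m) ℝ) (V : Matrix (Fin n) (Fin n) ℝ)
    (hU : U ∈ Matrix.orthogonalGroup (Fin m) ℝ)
    (hV : V ∈ Matrix.orthogonalGroup (Fin n) ℝ)
    (σx : Fin m → ℝ) (hσx0 : ∀ i, 0 ≤ σx i) (hσxdec : Antitone σx)
    (hX : X = U * diagMN m n σx * Vᵀ)
    (σ : Fin m → ℝ) (hσ0 : ∀ i, 0 ≤ σ i) (hσdec : Antitone σ) :
    frobSq m n (diagMN m n σx - diagMN m n σ) ≤ frobSq m n (X - diagMN m n σ) := by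
  classical
  open Finset FrobAux in
  -- notation
  have hAe : ∀ i : Fin m, diagMN m n σx i (Fin.castLE hmn i) = σx i := by
    intro i; simp [diagMN]
  -- expand both sides
  rw [expand_sub m n hmn, expand_sub m n hmn]
  rw [hX, frob_invariant m n hmn U V hU hV σx]
  simp only [Finset.sum_congr rfl fun i (_ : i ∈ Finset.univ) => congrArg (· * σ i) (hAe i)]
  -- reduces to the inner product inequality
  have main : ∑ i : Fin m, (U * diagMN m n σx * Vᵀ) i (Fin.castLE hmn i) * σ i
      ≤ ∑ i : Fin m, σx i * σ i := by
    -- orthonormality facts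
    have hUU : U * Uᵀ = 1 := by
      have := hU.2
      rwa [Matrix.star_eq_conjTranspose, Matrix.conjTranspose_eq_transpose_of_trivial] at this
    have hUU' : Uᵀ * U = 1 := by
      have := hU.1
      rwa [Matrix.star_eq_conjTranspose, Matrix.conjTranspose_eq_transpose_of_trivial] at this
    have hVV : V * Vᵀ = 1 := by
      have := hV.2
      rwa [Matrix.star_eq_conjTranspose, Matrix.conjTranspose_eq_transpose_of_trivial] at this
    have hVV' : Vᵀ * V = 1 := by
      have := hV.1
      rwa [Matrix.star_eq_conjTranspose, Matrix.conjTranspose_eq_transpose_of_trivial] at this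
    have hUrow : ∀ i : Fin m, ∑ k : Fin m, (U i k)^2 = 1 := by
      intro i
      have := congrFun (congrFun hUU i) i
      simpa [Matrix.mul_apply, Matrix.transpose_apply, Matrix.one_apply, sq] using this
    have hUcol : ∀ k : Fin m, ∑ i : Fin m, (U i k)^2 = 1 := by
      intro k
      have := congrFun (congrFun hUU' k) k
      simpa [Matrix.mul_apply, Matrix.transpose_apply, Matrix.one_apply, sq] using this
    have hVrow : ∀ i : Fin n, ∑ k : Fin n, (V i k)^2 = 1 := by
      intro i
      have := congrFun (congrFun hVV i) i
      simpa [Matrix.mul_apply, Matrix.transpose_apply, Matrix.one_apply, sq] using this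
    have hVcol : ∀ k : Fin n, ∑ i : Fin n, (V i k)^2 = 1 := by
      intro k
      have := congrFun (congrFun hVV' k) k
      simpa [Matrix.mul_apply, Matrix.transpose_apply, Matrix.one_apply, sq] using this
    -- ℕ-extended functions
    set f : ℕ → ℝ := fun i => if h : i < m then σ ⟨i, h⟩ else 0 with hf
    set g : ℕ → ℝ := fun i => if h : i < m then σx ⟨i, h⟩ else 0 with hg
    set u : ℕ → ℕ → ℝ :=
      fun i k => if h : i < m ∧ k < m then U ⟨i, h.1⟩ ⟨k, h.2⟩ else 0 with hu
    set v : ℕ → ℕ → ℝ :=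
      fun i k => if h : i < n ∧ k < n then V ⟨i, h.1⟩ ⟨k, h.2⟩ else 0 with hv
    have hfdec : ∀ s, f (s+1) ≤ f s := by
      intro s
      by_cases h1 : s + 1 < m
      · rw [hf]; simp only
        rw [dif_pos h1, dif_pos (by omega : s < m)]
        exact hσdec (by simp [Fin.le_def])
      · by_cases h2 : s < m
        · rw [hf]; simp only
          rw [dif_neg h1, dif_pos h2]
          exact hσ0 _
        · rw [hf]; simp only
          rw [dif_neg h1, dif_neg h2]
    have hgdec : ∀ s, g (s+1) ≤ g s := by
      intro s
      by_cases h1 : s + 1 < m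
      · rw [hg]; simp only
        rw [dif_pos h1, dif_pos (by omega : s < m)]
        exact hσxdec (by simp [Fin.le_def])
      · by_cases h2 : s < m
        · rw [hg]; simp only
          rw [dif_neg h1, dif_pos h2]
          exact hσx0 _
        · rw [hg]; simp only
          rw [dif_neg h1, dif_neg h2]
    have hfm : f m = 0 := by rw [hf]; simp
    have hgm : g m = 0 := by rw [hg]; simp
    -- row/column bounds in ℕ world
    have hu_row : ∀ i, i < m → ∑ k ∈ Finset.range m, (u i k)^2 = 1 := by
      intro i hi
      rw [← Fin.sum_univ_eq_sum_range (fun k => (u i k)^2) m]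
      rw [← hUrow ⟨i, hi⟩]
      refine Finset.sum_congr rfl fun k _ => ?_
      rw [hu]; simp only
      rw [dif_pos ⟨hi, k.isLt⟩]
    have hu_col : ∀ k, k < m → ∑ i ∈ Finset.range m, (u i k)^2 = 1 := by
      intro k hk
      rw [← Fin.sum_univ_eq_sum_range (fun i => (u i k)^2) m]
      rw [← hUcol ⟨k, hk⟩]
      refine Finset.sum_congr rfl fun i _ => ?_
      rw [hu]; simp only
      rw [dif_pos ⟨i.isLt, hk⟩]
    have hv_row : ∀ i, i < n → ∑ k ∈ Finset.range n, (v i k)^2 = 1 := by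
      intro i hi
      rw [← Fin.sum_univ_eq_sum_range (fun k => (v i k)^2) n]
      rw [← hVrow ⟨i, hi⟩]
      refine Finset.sum_congr rfl fun k _ => ?_
      rw [hv]; simp only
      rw [dif_pos ⟨hi, k.isLt⟩]
    have hv_col : ∀ k, k < n → ∑ i ∈ Finset.range n, (v i k)^2 = 1 := by
      intro k hk
      rw [← Fin.sum_univ_eq_sum_range (fun i => (v i k)^2) n]
      rw [← hVcol ⟨k, hk⟩]
      refine Finset.sum_congr rfl fun i _ => ?_
      rw [hv]; simp only
      rw [dif_pos ⟨i.isLt, hk⟩]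
    -- block sum bounds
    have block_bound : ∀ (N : ℕ) (w : ℕ → ℕ → ℝ) (s t : ℕ), s < N → t < N →
        (∀ i, i < N → ∑ k ∈ Finset.range N, (w i k)^2 = 1) →
        (∀ k, k < N → ∑ i ∈ Finset.range N, (w i k)^2 = 1) →
        ∑ i ∈ Finset.range (s+1), ∑ k ∈ Finset.range (t+1), (w i k)^2
          ≤ (min s t : ℝ) + 1 := by
      intro N w s t hs ht hrow hcol
      have hb1 : ∑ i ∈ Finset.range (s+1), ∑ k ∈ Finset.range (t+1), (w i k)^2 ≤ (s : ℝ) + 1 := by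
        calc ∑ i ∈ Finset.range (s+1), ∑ k ∈ Finset.range (t+1), (w i k)^2
            ≤ ∑ i ∈ Finset.range (s+1), (1 : ℝ) := by
              refine Finset.sum_le_sum fun i hi => ?_
              rw [Finset.mem_range] at hi
              rw [← hrow i (by omega)]
              refine Finset.sum_le_sum_of_subset_of_nonneg
                (Finset.range_subset_range.mpr (by omega)) (fun k _ _ => sq_nonneg _)
          _ = (s : ℝ) + 1 := by rw [Finset.sum_const, Finset.card_range, nsmul_eq_mul]; push_cast; ring
      have hb2 : ∑ i ∈ Finset.range (s+1), ∑ k ∈ Finset.range (t+1), (w i k)^2 ≤ (t : ℝ) + 1 := by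
        rw [Finset.sum_comm]
        calc ∑ k ∈ Finset.range (t+1), ∑ i ∈ Finset.range (s+1), (w i k)^2
            ≤ ∑ k ∈ Finset.range (t+1), (1 : ℝ) := by
              refine Finset.sum_le_sum fun k hk => ?_
              rw [Finset.mem_range] at hk
              rw [← hcol k (by omega)]
              refine Finset.sum_le_sum_of_subset_of_nonneg
                (Finset.range_subset_range.mpr (by omega)) (fun i _ _ => sq_nonneg _)
          _ = (t : ℝ) + 1 := by rw [Finset.sum_const, Finset.card_range, nsmul_eq_mul]; push_cast; ring
      rcases le_total s t with h | h
      · rw [min_eq_left (by exact_mod_cast h : (s:ℝ) ≤ (t:ℝ))]; exact hb1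
      · rw [min_eq_right (by exact_mod_cast h : (t:ℝ) ≤ (s:ℝ))]; exact hb2
    -- the W bound via Cauchy-Schwarz
    have hW : ∀ s t, s < m → t < m →
        ∑ i ∈ Finset.range (s+1), ∑ k ∈ Finset.range (t+1), u i k * v i k
          ≤ (min s t : ℝ) + 1 := by
      intro s t hs ht
      set S := ∑ i ∈ Finset.range (s+1), ∑ k ∈ Finset.range (t+1), u i k * v i k with hS
      have hCS := Finset.sum_mul_sq_le_sq_mul_sq
        ((Finset.range (s+1)) ×ˢ (Finset.range (t+1)))
        (fun p => u p.1 p.2) (fun p => v p.1 p.2)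
      rw [Finset.sum_product, Finset.sum_product, Finset.sum_product] at hCS
      have hA : ∑ i ∈ Finset.range (s+1), ∑ k ∈ Finset.range (t+1), (u i k)^2
          ≤ (min s t : ℝ) + 1 := block_bound m u s t hs ht hu_row hu_col
      have hB : ∑ i ∈ Finset.range (s+1), ∑ k ∈ Finset.range (t+1), (v i k)^2
          ≤ (min s t : ℝ) + 1 :=
        block_bound n v s t (by omega) (by omega) hv_row hv_col
      have hA0 : (0:ℝ) ≤ ∑ i ∈ Finset.range (s+1), ∑ k ∈ Finset.range (t+1), (u i k)^2 :=
        Finset.sum_nonneg fun i _ => Finset.sum_nonneg fun k _ => sq_nonneg _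
      have hB0 : (0:ℝ) ≤ ∑ i ∈ Finset.range (s+1), ∑ k ∈ Finset.range (t+1), (v i k)^2 :=
        Finset.sum_nonneg fun i _ => Finset.sum_nonneg fun k _ => sq_nonneg _
      have hc0 : (0:ℝ) ≤ (min s t : ℝ) + 1 := by positivity
      nlinarith [hCS, hA, hB, hA0, hB0, hc0]
    -- apply the key lemma
    have hkey := key_abel m f g hfdec hfm hgdec hgm (fun i k => u i k * v i k) hW
    -- translate sums between ℕ and Fin
    have hL : ∑ i ∈ Finset.range m, ∑ k ∈ Finset.range m, f i * g k * (u i k * v i k)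
        = ∑ i : Fin m, ∑ k : Fin m, σ i * σx k * (U i k * V (Fin.castLE hmn i) (Fin.castLE hmn k)) := by
      rw [← Fin.sum_univ_eq_sum_range
        (fun i => ∑ k ∈ Finset.range m, f i * g k * (u i k * v i k)) m]
      refine Finset.sum_congr rfl fun i _ => ?_
      rw [← Fin.sum_univ_eq_sum_range (fun k => f i * g k * (u i k * v i k)) m]
      refine Finset.sum_congr rfl fun k _ => ?_
      rw [hf, hg, hu, hv]; simp only
      rw [dif_pos i.isLt, dif_pos k.isLt, dif_pos ⟨i.isLt, k.isLt⟩,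
        dif_pos ⟨lt_of_lt_of_le i.isLt hmn, lt_of_lt_of_le k.isLt hmn⟩]
      rfl
    have hR : ∑ i ∈ Finset.range m, f i * g i = ∑ i : Fin m, σx i * σ i := by
      rw [← Fin.sum_univ_eq_sum_range (fun i => f i * g i) m]
      refine Finset.sum_congr rfl fun i _ => ?_
      rw [hf, hg]; simp only
      rw [dif_pos i.isLt, dif_pos i.isLt]
      rw [mul_comm]
    -- rewrite the LHS using the entry formula
    have hLHS : ∑ i : Fin m, (U * diagMN m n σx * Vᵀ) i (Fin.castLE hmn i) * σ i
        = ∑ i : Fin m, ∑ k : Fin m, σ i * σx k * (U i k * V (Fin.castLE hmn i) (Fin.castLE hmn k)) := by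
      refine Finset.sum_congr rfl fun i _ => ?_
      rw [entry_formula m n hmn U V σx i (Fin.castLE hmn i), Finset.sum_mul]
      refine Finset.sum_congr rfl fun k _ => ?_
      ring
    rw [hLHS, ← hL, ← hR]
    exact hkey
  have hsx : ∑ i : Fin m, (σx i)^2 = frobSq m n (diagMN m n σx) := by
    unfold frobSq
    refine Finset.sum_congr rfl fun i _ => ?_
    have h1 : ∀ (j : Fin n), ((i:ℕ) = (j:ℕ)) ↔ j = Fin.castLE hmn i := by
      intro j; rw [Fin.ext_iff]; simp [Fin.coe_castLE]; omega
    have h2 : ∀ j : Fin n, (diagMN m n σx i j)^2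
        = if j = Fin.castLE hmn i then σx i ^ 2 else 0 := by
      intro j
      simp only [diagMN, Matrix.of_apply]
      by_cases hc : (i:ℕ) = (j:ℕ)
      · rw [if_pos hc, if_pos ((h1 j).mp hc)]
      · rw [if_neg hc, if_neg (fun h => hc ((h1 j).mpr h))]
        ring
    rw [Finset.sum_congr rfl fun j _ => h2 j, Finset.sum_ite_eq' Finset.univ]
    simp
  linarith [main]
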